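/- arXiv:2105.08451 — 3 statements merged into one kernel-verified Lean document; each statement's English description precedes it below -/
import Mathlib

section
/- Cov(Σ_{j=0}^{N₁−1} ξ_j, Σ_{j=0}^{N₂−1} η_j) = Cov(ξ₀, η₀) · E[min(N₁, N₂)]. -/
open MeasureTheory ProbabilityTheory Filter

open scoped ENNReal NNReal

lemma tsum_prod_mul_aux {f g : ℕ → ℝ} (hf : Summable f) (hg : Summable g)
    (hf0 : ∀ m, 0 ≤ f m) (hg0 : ∀ n, 0 ≤ g n) :
    ∑' mn : ℕ × ℕ, f mn.1 * g mn.2 = (∑' m, f m) * ∑' n, g n := by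
  have hs : Summable (fun mn : ℕ × ℕ => f mn.1 * g mn.2) :=
    hf.mul_of_nonneg hg hf0 hg0
  rw [Summable.tsum_prod' hs (fun m => (hg.mul_left (f m)))]
  simp_rw [tsum_mul_left]
  rw [tsum_mul_right]

lemma poisson_mul_summable (r : ℝ≥0) :
    Summable (fun m : ℕ => poissonPMFReal r m * m) := by
  have h : Summable (fun k : ℕ => (Real.exp (-(r : ℝ)) * (r : ℝ)) * ((r : ℝ) ^ k / k.factorial)) :=
    (Real.summable_pow_div_factorial (r : ℝ)).mul_left _
  refine (_root_.summable_nat_add_iff 1).mp (h.congr fun k => ?_)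
  unfold poissonPMFReal
  rw [Nat.factorial_succ]
  have hk : (k.factorial : ℝ) ≠ 0 := Nat.cast_ne_zero.2 k.factorial_ne_zero
  have hk1 : ((k : ℝ) + 1) ≠ 0 := by positivity
  push_cast
  field_simp
  ring


lemma key_decomp {Ω : Type*} [MeasurableSpace Ω] (P : Measure Ω) [IsProbabilityMeasure P]
    (T : Ω → ℕ × ℕ) (hT : Measurable T)
    (X : Ω → ℕ → ℝ × ℝ) (hX : Measurable X)
    (hXT : IndepFun X T P)
    (g : (ℕ → ℝ × ℝ) → ℕ × ℕ → ℝ) (hg : ∀ mn, Measurable (fun x => g x mn))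
    (hint : ∀ mn : ℕ × ℕ, Integrable (fun ω => g (X ω) mn) P)
    (hsum : Summable (fun mn : ℕ × ℕ =>
      (P (T ⁻¹' {mn})).toReal * ∫ ω, |g (X ω) mn| ∂P)) :
    Integrable (fun ω => g (X ω) (T ω)) P ∧
      ∫ ω, g (X ω) (T ω) ∂P
        = ∑' mn : ℕ × ℕ, (P (T ⁻¹' {mn})).toReal * ∫ ω, g (X ω) mn ∂P := by
  set A : ℕ × ℕ → Set Ω := fun mn => T ⁻¹' {mn} with hA
  have hAm : ∀ mn, MeasurableSet (A mn) := fun mn => hT (measurableSet_singleton mn)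
  have hAd : Pairwise (Function.onFun Disjoint A) := by
    intro mn mn' hne
    exact Disjoint.preimage T (by simpa using hne)
  have hAu : (⋃ mn, A mn) = Set.univ := by
    ext ω; simp [hA]
  have hfmeas : Measurable (fun ω => g (X ω) (T ω)) := by
    have hunc : Measurable (fun pq : (ℕ → ℝ × ℝ) × (ℕ × ℕ) => g pq.1 pq.2) :=
      measurable_from_prod_countable_left (fun mn => hg mn)
    exact hunc.comp (hX.prodMk hT)
  -- generic per-piece identity, no integrability needed
  have step : ∀ (h : (ℕ → ℝ × ℝ) → ℕ × ℕ → ℝ), (∀ mn, Measurable fun x => h x mn) →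
      ∀ mn : ℕ × ℕ, ∫ ω in A mn, h (X ω) (T ω) ∂P
        = (P (A mn)).toReal * ∫ ω, h (X ω) mn ∂P := by
    intro h hh mn
    have h1 : ∫ ω in A mn, h (X ω) (T ω) ∂P = ∫ ω in A mn, h (X ω) mn ∂P := by
      refine setIntegral_congr_fun (hAm mn) (fun ω hω => ?_)
      have : T ω = mn := hω
      rw [this]
    have h2 : ∫ ω in A mn, h (X ω) mn ∂P
        = ∫ ω, (fun ω => h (X ω) mn) ω * (if T ω = mn then (1:ℝ) else 0) ∂P := by
      rw [← integral_indicator (hAm mn)]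
      congr 1; ext ω
      by_cases hω : T ω = mn <;> simp [Set.indicator, hA, hω]
    have hind : IndepFun (fun ω => h (X ω) mn) (fun ω => if T ω = mn then (1:ℝ) else 0) P := by
      have : (fun ω => if T ω = mn then (1:ℝ) else 0)
          = (fun p : ℕ × ℕ => if p = mn then (1:ℝ) else 0) ∘ T := rfl
      rw [this]
      exact hXT.comp (hh mn) (measurable_of_countable _)
    have h3 : ∫ ω, (fun ω => h (X ω) mn) ω * (if T ω = mn then (1:ℝ) else 0) ∂P
        = (∫ ω, h (X ω) mn ∂P) * ∫ ω, (if T ω = mn then (1:ℝ) else 0) ∂P := by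
      exact hind.integral_fun_mul_eq_mul_integral ((hh mn).comp hX).aestronglyMeasurable
        (measurable_of_countable (fun p : ℕ × ℕ => if p = mn then (1:ℝ) else 0)
          |>.comp hT).aestronglyMeasurable
    have h4 : ∫ ω, (if T ω = mn then (1:ℝ) else 0) ∂P = (P (A mn)).toReal := by
      have : (fun ω => if T ω = mn then (1:ℝ) else 0) = (A mn).indicator 1 := by
        ext ω; by_cases hω : T ω = mn <;> simp [Set.indicator, hA, hω]
      rw [this, integral_indicator_one (hAm mn)]; rfl
    rw [h1, h2, h3, h4, mul_comm]
  -- integrability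
  have habs : ∀ mn : ℕ × ℕ, ∫ ω in A mn, |g (X ω) (T ω)| ∂P
      = (P (A mn)).toReal * ∫ ω, |g (X ω) mn| ∂P :=
    step (fun x mn => |g x mn|) (fun mn => (hg mn).abs)
  -- now finiteness via lintegral
  have hlin : ∀ mn : ℕ × ℕ, ∫⁻ ω in A mn, ‖g (X ω) (T ω)‖₊ ∂P
      = ENNReal.ofReal ((P (A mn)).toReal * ∫ ω, |g (X ω) mn| ∂P) := by
    intro mn
    have e1 : ∫⁻ ω in A mn, ‖g (X ω) (T ω)‖₊ ∂P = ∫⁻ ω in A mn, ‖g (X ω) mn‖₊ ∂P := by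
      refine setLIntegral_congr_fun (hAm mn) (fun ω hω => ?_)
      have : T ω = mn := hω
      rw [this]
    have e2 : ∫⁻ ω in A mn, ‖g (X ω) mn‖₊ ∂P
        = ∫⁻ ω, (‖g (X ω) mn‖₊ : ℝ≥0∞) * (if T ω = mn then (1:ℝ≥0∞) else 0) ∂P := by
      rw [← lintegral_indicator (hAm mn)]
      congr 1; ext ω
      by_cases hω : T ω = mn <;> simp [Set.indicator, hA, hω]
    have hmf : Measurable (fun ω => (‖g (X ω) mn‖₊ : ℝ≥0∞)) :=
      ((hg mn).comp hX).nnnorm.coe_nnreal_ennreal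
    have hmg : Measurable (fun ω => (if T ω = mn then (1:ℝ≥0∞) else 0)) :=
      (measurable_of_countable (fun p : ℕ × ℕ => if p = mn then (1:ℝ≥0∞) else 0)).comp hT
    have hind : IndepFun (fun ω => (‖g (X ω) mn‖₊ : ℝ≥0∞))
        (fun ω => (if T ω = mn then (1:ℝ≥0∞) else 0)) P := by
      have h1 : (fun ω => (‖g (X ω) mn‖₊ : ℝ≥0∞))
          = (fun x => (‖g x mn‖₊ : ℝ≥0∞)) ∘ X := rfl
      have h2 : (fun ω => (if T ω = mn then (1:ℝ≥0∞) else 0))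
          = (fun p : ℕ × ℕ => if p = mn then (1:ℝ≥0∞) else 0) ∘ T := rfl
      rw [h1, h2]
      exact hXT.comp ((hg mn).nnnorm.coe_nnreal_ennreal) (measurable_of_countable _)
    have e3 := lintegral_mul_eq_lintegral_mul_lintegral_of_indepFun hmf hmg hind
    have e4 : ∫⁻ ω, (if T ω = mn then (1:ℝ≥0∞) else 0) ∂P = P (A mn) := by
      have : (fun ω => if T ω = mn then (1:ℝ≥0∞) else 0) = (A mn).indicator 1 := by
        ext ω; by_cases hω : T ω = mn <;> simp [Set.indicator, hA, hω]
      rw [this, lintegral_indicator_one (hAm mn)]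
    have e5 : ∫⁻ ω, (‖g (X ω) mn‖₊ : ℝ≥0∞) ∂P = ENNReal.ofReal (∫ ω, |g (X ω) mn| ∂P) := by
      simp_rw [← enorm_eq_nnnorm]; rw [← ofReal_integral_norm_eq_lintegral_enorm (hint mn)]
      simp [Real.norm_eq_abs]
    rw [e1, e2]
    calc ∫⁻ ω, (‖g (X ω) mn‖₊ : ℝ≥0∞) * (if T ω = mn then (1:ℝ≥0∞) else 0) ∂P
        = (∫⁻ ω, (‖g (X ω) mn‖₊ : ℝ≥0∞) ∂P) * ∫⁻ ω, (if T ω = mn then (1:ℝ≥0∞) else 0) ∂P := e3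
      _ = ENNReal.ofReal (∫ ω, |g (X ω) mn| ∂P) * P (A mn) := by rw [e4, e5]
      _ = ENNReal.ofReal (∫ ω, |g (X ω) mn| ∂P) * ENNReal.ofReal ((P (A mn)).toReal) := by
          rw [ENNReal.ofReal_toReal (measure_ne_top P _)]
      _ = ENNReal.ofReal ((P (A mn)).toReal * ∫ ω, |g (X ω) mn| ∂P) := by
          rw [← ENNReal.ofReal_mul (integral_nonneg (fun ω => abs_nonneg _)), mul_comm]
  have hfin : HasFiniteIntegral (fun ω => g (X ω) (T ω)) P := by
    rw [hasFiniteIntegral_def]; simp only [enorm_eq_nnnorm]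
    have : ∫⁻ ω, ‖g (X ω) (T ω)‖₊ ∂P = ∑' mn : ℕ × ℕ, ∫⁻ ω in A mn, ‖g (X ω) (T ω)‖₊ ∂P := by
      rw [← lintegral_iUnion hAm hAd, hAu, setLIntegral_univ]
    rw [this]
    have : ∑' mn : ℕ × ℕ, ∫⁻ ω in A mn, ‖g (X ω) (T ω)‖₊ ∂P
        = ENNReal.ofReal (∑' mn : ℕ × ℕ, (P (A mn)).toReal * ∫ ω, |g (X ω) mn| ∂P) := by
      rw [ENNReal.ofReal_tsum_of_nonneg (fun mn => mul_nonneg ENNReal.toReal_nonneg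
        (integral_nonneg fun ω => abs_nonneg _)) hsum]
      exact tsum_congr hlin
    rw [this]
    exact ENNReal.ofReal_lt_top
  have hfint : Integrable (fun ω => g (X ω) (T ω)) P := ⟨hfmeas.aestronglyMeasurable, hfin⟩
  refine ⟨hfint, ?_⟩
  rw [← setIntegral_univ, ← hAu, integral_iUnion hAm hAd (by rw [hAu]; exact hfint.integrableOn)]
  exact tsum_congr (step g hg)

/-- The covariance of two real-valued random variables. -/
noncomputable def covar {Ω : Type*} [MeasurableSpace Ω] (P : Measure Ω) (X Y : Ω → ℝ) : ℝ :=
  (∫ ω, X ω * Y ω ∂P) - (∫ ω, X ω ∂P) * ∫ ω, Y ω ∂P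

/-- **Covariance of two compound Poisson sums with shared summand pairs.**
If `N₁, N₂` are independent Poisson (λ) counts, `((ξ_j, η_j))_j` is an i.i.d. sequence of
pairs of square-integrable random variables independent of `(N₁, N₂)`, then
`Cov (∑_{j < N₁} ξ_j, ∑_{j < N₂} η_j) = Cov (ξ₀, η₀) * E [min (N₁, N₂)]`. -/
theorem compoundPoisson_cov_eq_cov_mul_expMin
    {Ω : Type*} [MeasurableSpace Ω] (P : Measure Ω) [IsProbabilityMeasure P]
    (lam : NNReal) (hlam : 0 < lam)
    (N₁ N₂ : Ω → ℕ) (hN₁meas : Measurable N₁) (hN₂meas : Measurable N₂)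
    (hN₁pois : P.map N₁ = poissonMeasure lam) (hN₂pois : P.map N₂ = poissonMeasure lam)
    (hNindep : IndepFun N₁ N₂ P)
    (ξ η : ℕ → Ω → ℝ)
    (hmeas : ∀ j, Measurable (fun ω => (ξ j ω, η j ω)))
    (hξsq : ∀ j, MemLp (ξ j) 2 P) (hηsq : ∀ j, MemLp (η j) 2 P)
    (hiid : iIndepFun (fun j ω => (ξ j ω, η j ω)) P)
    (hident : ∀ j, P.map (fun ω => (ξ j ω, η j ω)) = P.map (fun ω => (ξ 0 ω, η 0 ω)))
    (hindep : IndepFun (fun ω => fun j => (ξ j ω, η j ω)) (fun ω => (N₁ ω, N₂ ω)) P) :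
    covar P (fun ω => ∑ j ∈ Finset.range (N₁ ω), ξ j ω)
            (fun ω => ∑ j ∈ Finset.range (N₂ ω), η j ω)
      = covar P (ξ 0) (η 0) * ∫ ω, (min (N₁ ω) (N₂ ω) : ℝ) ∂P := by
  classical
  set X : Ω → ℕ → ℝ × ℝ := fun ω j => (ξ j ω, η j ω) with hXdef
  set T : Ω → ℕ × ℕ := fun ω => (N₁ ω, N₂ ω) with hTdef
  have hXmeas : Measurable X := measurable_pi_lambda _ (fun j => hmeas j)
  have hTmeas : Measurable T := hN₁meas.prodMk hN₂meas
  have hXT : IndepFun X T P := hindep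
  set a := ∫ ω, ξ 0 ω ∂P with ha
  set b := ∫ ω, η 0 ω ∂P with hb
  set c := ∫ ω, ξ 0 ω * η 0 ω ∂P with hc
  -- basic integrability
  have hξint : ∀ j, Integrable (ξ j) P := fun j => (hξsq j).integrable one_le_two
  have hηint : ∀ j, Integrable (η j) P := fun j => (hηsq j).integrable one_le_two
  have hmulint : ∀ j k, Integrable (fun ω => ξ j ω * η k ω) P := by
    intro j k
    have h12 : (1 : ℝ≥0∞) / 1 = 1 / 2 + 1 / 2 := by
      have h2 : (2 : ℝ≥0∞) / 2 = 1 := ENNReal.div_self (by norm_num) (by norm_num)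
      rw [ENNReal.div_add_div_same, one_div_one, show ((1 : ℝ≥0∞) + 1) = 2 from by norm_num, h2]
    have := ((hηsq k).smul (hξsq j) : MemLp ((ξ j) • (η k)) 1 P)
    have h2 := this.integrable le_rfl
    exact h2
  -- identical distribution transfer
  have hmap : ∀ (j : ℕ) (φ : ℝ × ℝ → ℝ), Measurable φ →
      ∫ ω, φ (ξ j ω, η j ω) ∂P = ∫ ω, φ (ξ 0 ω, η 0 ω) ∂P := by
    intro j φ hφ
    rw [← integral_map (hmeas j).aemeasurable hφ.aestronglyMeasurable, hident j,
      integral_map (hmeas 0).aemeasurable hφ.aestronglyMeasurable]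
  have hEξ : ∀ j, ∫ ω, ξ j ω ∂P = a := fun j => hmap j (fun p => p.1) measurable_fst
  have hEη : ∀ j, ∫ ω, η j ω ∂P = b := fun j => hmap j (fun p => p.2) measurable_snd
  have hEc : ∀ j, ∫ ω, ξ j ω * η j ω ∂P = c :=
    fun j => hmap j (fun p => p.1 * p.2) (measurable_fst.mul measurable_snd)
  set a' := ∫ ω, |ξ 0 ω| ∂P with ha'
  set b' := ∫ ω, |η 0 ω| ∂P with hb'
  set c' := ∫ ω, |ξ 0 ω * η 0 ω| ∂P with hc'
  have hEξ' : ∀ j, ∫ ω, |ξ j ω| ∂P = a' := fun j => hmap j (fun p => |p.1|) measurable_fst.abs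
  have hEη' : ∀ j, ∫ ω, |η j ω| ∂P = b' := fun j => hmap j (fun p => |p.2|) measurable_snd.abs
  have hEc' : ∀ j, ∫ ω, |ξ j ω * η j ω| ∂P = c' :=
    fun j => hmap j (fun p => |p.1 * p.2|) (measurable_fst.mul measurable_snd).abs
  have ha'0 : 0 ≤ a' := integral_nonneg fun ω => abs_nonneg _
  have hb'0 : 0 ≤ b' := integral_nonneg fun ω => abs_nonneg _
  have hc'0 : 0 ≤ c' := integral_nonneg fun ω => abs_nonneg _
  -- off-diagonal independence
  have hoff : ∀ j k, j ≠ k → ∫ ω, ξ j ω * η k ω ∂P = a * b := by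
    intro j k hjk
    have hind : IndepFun (ξ j) (η k) P :=
      (hiid.indepFun hjk).comp measurable_fst measurable_snd
    have h : ∫ ω, ξ j ω * η k ω ∂P = (∫ ω, ξ j ω ∂P) * ∫ ω, η k ω ∂P :=
      hind.integral_fun_mul_eq_mul_integral (hξint j).aestronglyMeasurable (hηint k).aestronglyMeasurable
    rw [h, hEξ j, hEη k]
  have hoff' : ∀ j k, j ≠ k → ∫ ω, |ξ j ω * η k ω| ∂P = a' * b' := by
    intro j k hjk
    have hind : IndepFun (fun ω => |ξ j ω|) (fun ω => |η k ω|) P :=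
      (hiid.indepFun hjk).comp measurable_fst.abs measurable_snd.abs
    have h1 : ∫ ω, |ξ j ω * η k ω| ∂P = ∫ ω, |ξ j ω| * |η k ω| ∂P := by
      simp_rw [abs_mul]
    have h : ∫ ω, |ξ j ω| * |η k ω| ∂P = (∫ ω, |ξ j ω| ∂P) * ∫ ω, |η k ω| ∂P :=
      hind.integral_fun_mul_eq_mul_integral (hξint j).abs.aestronglyMeasurable (hηint k).abs.aestronglyMeasurable
    rw [h1, h, hEξ' j, hEη' k]
  set K := c' + a' * b' with hK
  have habsK : ∀ j k, ∫ ω, |ξ j ω * η k ω| ∂P ≤ K := by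
    intro j k
    by_cases hjk : j = k
    · subst hjk; rw [hEc' j, hK]; nlinarith [mul_nonneg ha'0 hb'0]
    · rw [hoff' j k hjk, hK]; linarith
  have hK0 : 0 ≤ K := by rw [hK]; nlinarith [mul_nonneg ha'0 hb'0]
  -- product-sum integrability and value
  have hSTint : ∀ m n : ℕ, Integrable
      (fun ω => (∑ j ∈ Finset.range m, ξ j ω) * ∑ k ∈ Finset.range n, η k ω) P := by
    intro m n
    have hrw : (fun ω => (∑ j ∈ Finset.range m, ξ j ω) * ∑ k ∈ Finset.range n, η k ω)
        = fun ω => ∑ j ∈ Finset.range m, ∑ k ∈ Finset.range n, ξ j ω * η k ω := by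
      funext ω; rw [Finset.sum_mul_sum]
    rw [hrw]
    exact integrable_finset_sum _ fun j _ => integrable_finset_sum _ fun k _ => hmulint j k
  have hI : ∀ m n : ℕ, ∫ ω, (∑ j ∈ Finset.range m, ξ j ω) * ∑ k ∈ Finset.range n, η k ω ∂P
      = (m : ℝ) * n * (a * b) + (min m n : ℕ) * (c - a * b) := by
    intro m n
    have hrw : (fun ω => (∑ j ∈ Finset.range m, ξ j ω) * ∑ k ∈ Finset.range n, η k ω)
        = fun ω => ∑ j ∈ Finset.range m, ∑ k ∈ Finset.range n, ξ j ω * η k ω := by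
      funext ω; rw [Finset.sum_mul_sum]
    rw [hrw, integral_finset_sum _ (fun j _ => integrable_finset_sum _ fun k _ => hmulint j k)]
    have : ∀ j ∈ Finset.range m, ∫ ω, ∑ k ∈ Finset.range n, ξ j ω * η k ω ∂P
        = ∑ k ∈ Finset.range n, ∫ ω, ξ j ω * η k ω ∂P :=
      fun j _ => integral_finset_sum _ fun k _ => hmulint j k
    rw [Finset.sum_congr rfl this]
    have hval : ∀ j k : ℕ, ∫ ω, ξ j ω * η k ω ∂P
        = a * b + if j = k then c - a * b else 0 := by
      intro j k
      by_cases hjk : j = k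
      · subst hjk; rw [hEc j]; simp
      · rw [hoff j k hjk]; simp [hjk]
    simp_rw [hval]
    rw [Finset.sum_congr rfl (fun j _ => Finset.sum_add_distrib)]
    rw [Finset.sum_add_distrib]
    congr 1
    · simp [Finset.sum_const, Finset.card_range, mul_assoc]
    · have h1 : ∀ j ∈ Finset.range m,
          (∑ k ∈ Finset.range n, if j = k then c - a * b else 0)
            = if j ∈ Finset.range n then c - a * b else 0 := by
        intro j _
        rw [Finset.sum_ite_eq (Finset.range n) j (fun _ => c - a * b)]
      have h2 : Finset.range m ∩ Finset.range n = Finset.range (min m n) := by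
        ext x; simp [Nat.lt_min]
      rw [Finset.sum_congr rfl h1, Finset.sum_ite_mem, h2, Finset.sum_const,
        Finset.card_range, nsmul_eq_mul]
  -- Poisson marginals
  set p : ℕ → ℝ := fun m => (P (N₁ ⁻¹' {m})).toReal with hpdef
  set q : ℕ → ℝ := fun n => (P (N₂ ⁻¹' {n})).toReal with hqdef
  have hpval : ∀ m, p m = poissonPMFReal lam m := by
    intro m
    rw [hpdef]
    simp only
    rw [← Measure.map_apply hN₁meas (measurableSet_singleton m), hN₁pois,
      poissonMeasure_singleton]
    show (ENNReal.ofReal (poissonPMFReal lam m)).toReal = _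
    rw [ENNReal.toReal_ofReal poissonPMFReal_nonneg]
  have hqval : ∀ n, q n = poissonPMFReal lam n := by
    intro n
    rw [hqdef]
    simp only
    rw [← Measure.map_apply hN₂meas (measurableSet_singleton n), hN₂pois,
      poissonMeasure_singleton]
    show (ENNReal.ofReal (poissonPMFReal lam n)).toReal = _
    rw [ENNReal.toReal_ofReal poissonPMFReal_nonneg]
  have hp0 : ∀ m, 0 ≤ p m := fun m => ENNReal.toReal_nonneg
  have hq0 : ∀ n, 0 ≤ q n := fun n => ENNReal.toReal_nonneg
  have hqsum : Summable q := ((poissonPMFRealSum lam).summable).congr fun n => (hqval n).symm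
  have hqtsum : ∑' n, q n = 1 := by
    rw [tsum_congr hqval]; exact (poissonPMFRealSum lam).tsum_eq
  have hpsum : Summable p := ((poissonPMFRealSum lam).summable).congr fun m => (hpval m).symm
  have hptsum : ∑' m, p m = 1 := by
    rw [tsum_congr hpval]; exact (poissonPMFRealSum lam).tsum_eq
  have hpm : Summable (fun m => p m * m) :=
    (poisson_mul_summable lam).congr fun m => by rw [hpval m]
  have hqm : Summable (fun n => q n * n) :=
    (poisson_mul_summable lam).congr fun n => by rw [hqval n]
  have hpm0 : ∀ m, 0 ≤ p m * m := fun m => mul_nonneg (hp0 m) (Nat.cast_nonneg m)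
  have hqm0 : ∀ n, 0 ≤ q n * n := fun n => mul_nonneg (hq0 n) (Nat.cast_nonneg n)
  set M₁ := ∑' m, p m * m with hM₁
  set M₂ := ∑' n, q n * n with hM₂
  -- joint law factorization
  have hμ : ∀ mn : ℕ × ℕ, (P (T ⁻¹' {mn})).toReal = p mn.1 * q mn.2 := by
    rintro ⟨m, n⟩
    have hset : T ⁻¹' {(m, n)} = N₁ ⁻¹' {m} ∩ N₂ ⁻¹' {n} := by
      ext ω; simp [hTdef, Prod.ext_iff]
    rw [hset, indepFun_iff_measure_inter_preimage_eq_mul.mp hNindep {m} {n}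
      (measurableSet_singleton m) (measurableSet_singleton n), ENNReal.toReal_mul]
  -- ===== application 1 : the product sum =====
  set g₁ : (ℕ → ℝ × ℝ) → ℕ × ℕ → ℝ :=
    fun x mn => (∑ j ∈ Finset.range mn.1, (x j).1) * ∑ k ∈ Finset.range mn.2, (x k).2 with hg₁def
  have hg₁ : ∀ mn, Measurable (fun x => g₁ x mn) := fun mn =>
    (Finset.measurable_sum _ fun j _ => (measurable_pi_apply j).fst).mul
      (Finset.measurable_sum _ fun k _ => (measurable_pi_apply k).snd)
  have hint₁ : ∀ mn : ℕ × ℕ, Integrable (fun ω => g₁ (X ω) mn) P := fun mn => hSTint mn.1 mn.2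
  have habs₁ : ∀ mn : ℕ × ℕ, ∫ ω, |g₁ (X ω) mn| ∂P ≤ mn.1 * mn.2 * K := by
    rintro ⟨m, n⟩
    have hptw : ∀ ω, |g₁ (X ω) (m, n)|
        ≤ ∑ j ∈ Finset.range m, ∑ k ∈ Finset.range n, |ξ j ω * η k ω| := by
      intro ω
      calc |g₁ (X ω) (m, n)|
          = |∑ j ∈ Finset.range m, ∑ k ∈ Finset.range n, ξ j ω * η k ω| := by
            rw [hg₁def]; simp only; rw [Finset.sum_mul_sum]
        _ ≤ ∑ j ∈ Finset.range m, |∑ k ∈ Finset.range n, ξ j ω * η k ω| :=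
            Finset.abs_sum_le_sum_abs _ _
        _ ≤ ∑ j ∈ Finset.range m, ∑ k ∈ Finset.range n, |ξ j ω * η k ω| :=
            Finset.sum_le_sum fun j _ => Finset.abs_sum_le_sum_abs _ _
    calc ∫ ω, |g₁ (X ω) (m, n)| ∂P
        ≤ ∫ ω, ∑ j ∈ Finset.range m, ∑ k ∈ Finset.range n, |ξ j ω * η k ω| ∂P :=
          integral_mono (hint₁ (m, n)).abs
            (integrable_finset_sum _ fun j _ =>
              integrable_finset_sum _ fun k _ => (hmulint j k).abs) hptw
      _ = ∑ j ∈ Finset.range m, ∑ k ∈ Finset.range n, ∫ ω, |ξ j ω * η k ω| ∂P := by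
          rw [integral_finset_sum _ (fun j _ =>
            integrable_finset_sum _ fun k _ => (hmulint j k).abs)]
          exact Finset.sum_congr rfl fun j _ =>
            integral_finset_sum _ fun k _ => (hmulint j k).abs
      _ ≤ ∑ j ∈ Finset.range m, ∑ k ∈ Finset.range n, K :=
          Finset.sum_le_sum fun j _ => Finset.sum_le_sum fun k _ => habsK j k
      _ = m * n * K := by
          simp [Finset.sum_const, Finset.card_range]; ring
  have hsum₁ : Summable
      (fun mn : ℕ × ℕ => (P (T ⁻¹' {mn})).toReal * ∫ ω, |g₁ (X ω) mn| ∂P) := by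
    have hbd : Summable (fun mn : ℕ × ℕ => (p mn.1 * mn.1) * (q mn.2 * mn.2) * K) :=
      (hpm.mul_of_nonneg hqm hpm0 hqm0).mul_right K
    refine Summable.of_nonneg_of_le (fun mn => mul_nonneg ENNReal.toReal_nonneg
      (integral_nonneg fun ω => abs_nonneg _)) (fun mn => ?_) hbd
    rw [hμ mn]
    calc p mn.1 * q mn.2 * ∫ ω, |g₁ (X ω) mn| ∂P
        ≤ p mn.1 * q mn.2 * (mn.1 * mn.2 * K) :=
          mul_le_mul_of_nonneg_left (habs₁ mn) (mul_nonneg (hp0 _) (hq0 _))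
      _ = (p mn.1 * mn.1) * (q mn.2 * mn.2) * K := by ring
  obtain ⟨hi₁, he₁⟩ := key_decomp P T hTmeas X hXmeas hXT g₁ hg₁ hint₁ hsum₁
  have he₁' : ∫ ω, (∑ j ∈ Finset.range (N₁ ω), ξ j ω) * ∑ k ∈ Finset.range (N₂ ω), η k ω ∂P
      = ∑' mn : ℕ × ℕ, (p mn.1 * q mn.2) *
          ((mn.1 * mn.2) * (a * b) + ((min mn.1 mn.2 : ℕ) : ℝ) * (c - a * b)) := by
    rw [show (fun ω => (∑ j ∈ Finset.range (N₁ ω), ξ j ω) * ∑ k ∈ Finset.range (N₂ ω), η k ω)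
        = fun ω => g₁ (X ω) (T ω) from rfl, he₁]
    refine tsum_congr fun mn => ?_
    rw [hμ mn, show (fun ω => g₁ (X ω) mn)
        = fun ω => (∑ j ∈ Finset.range mn.1, ξ j ω) * ∑ k ∈ Finset.range mn.2, η k ω from rfl,
      hI mn.1 mn.2]
  -- ===== application 2 : first sum =====
  set g₂ : (ℕ → ℝ × ℝ) → ℕ × ℕ → ℝ := fun x mn => ∑ j ∈ Finset.range mn.1, (x j).1 with hg₂def
  have hg₂ : ∀ mn, Measurable (fun x => g₂ x mn) := fun mn =>
    Finset.measurable_sum _ fun j _ => (measurable_pi_apply j).fst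
  have hint₂ : ∀ mn : ℕ × ℕ, Integrable (fun ω => g₂ (X ω) mn) P := fun mn =>
    integrable_finset_sum _ fun j _ => hξint j
  have habs₂ : ∀ mn : ℕ × ℕ, ∫ ω, |g₂ (X ω) mn| ∂P ≤ mn.1 * a' := by
    rintro ⟨m, n⟩
    calc ∫ ω, |g₂ (X ω) (m, n)| ∂P
        ≤ ∫ ω, ∑ j ∈ Finset.range m, |ξ j ω| ∂P :=
          integral_mono (hint₂ (m, n)).abs
            (integrable_finset_sum _ fun j _ => (hξint j).abs)
            (fun ω => Finset.abs_sum_le_sum_abs _ _)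
      _ = ∑ j ∈ Finset.range m, ∫ ω, |ξ j ω| ∂P :=
          integral_finset_sum _ fun j _ => (hξint j).abs
      _ = m * a' := by
          rw [Finset.sum_congr rfl fun j _ => hEξ' j, Finset.sum_const, Finset.card_range,
            nsmul_eq_mul]
  have hsum₂ : Summable
      (fun mn : ℕ × ℕ => (P (T ⁻¹' {mn})).toReal * ∫ ω, |g₂ (X ω) mn| ∂P) := by
    have hbd : Summable (fun mn : ℕ × ℕ => (p mn.1 * mn.1) * q mn.2 * a') :=
      ((hpm.mul_of_nonneg hqsum hpm0 hq0).mul_right a')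
    refine Summable.of_nonneg_of_le (fun mn => mul_nonneg ENNReal.toReal_nonneg
      (integral_nonneg fun ω => abs_nonneg _)) (fun mn => ?_) hbd
    rw [hμ mn]
    calc p mn.1 * q mn.2 * ∫ ω, |g₂ (X ω) mn| ∂P
        ≤ p mn.1 * q mn.2 * (mn.1 * a') :=
          mul_le_mul_of_nonneg_left (habs₂ mn) (mul_nonneg (hp0 _) (hq0 _))
      _ = (p mn.1 * mn.1) * q mn.2 * a' := by ring
  obtain ⟨hi₂, he₂⟩ := key_decomp P T hTmeas X hXmeas hXT g₂ hg₂ hint₂ hsum₂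
  have he₂' : ∫ ω, ∑ j ∈ Finset.range (N₁ ω), ξ j ω ∂P = M₁ * a := by
    rw [show (fun ω => ∑ j ∈ Finset.range (N₁ ω), ξ j ω)
        = fun ω => g₂ (X ω) (T ω) from rfl, he₂]
    have hval : ∀ mn : ℕ × ℕ, (P (T ⁻¹' {mn})).toReal * ∫ ω, g₂ (X ω) mn ∂P
        = ((p mn.1 * mn.1) * q mn.2) * a := by
      intro mn
      rw [hμ mn, show (fun ω => g₂ (X ω) mn) = fun ω => ∑ j ∈ Finset.range mn.1, ξ j ω from rfl,
        integral_finset_sum _ fun j _ => hξint j,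
        Finset.sum_congr rfl fun j ( _ : j ∈ Finset.range mn.1) => hEξ j, Finset.sum_const,
        Finset.card_range, nsmul_eq_mul]
      ring
    rw [tsum_congr hval, tsum_mul_right, tsum_prod_mul_aux hpm hqsum hpm0 hq0, hqtsum, mul_one]
  -- ===== application 3 : second sum =====
  set g₃ : (ℕ → ℝ × ℝ) → ℕ × ℕ → ℝ := fun x mn => ∑ k ∈ Finset.range mn.2, (x k).2 with hg₃def
  have hg₃ : ∀ mn, Measurable (fun x => g₃ x mn) := fun mn =>
    Finset.measurable_sum _ fun k _ => (measurable_pi_apply k).snd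
  have hint₃ : ∀ mn : ℕ × ℕ, Integrable (fun ω => g₃ (X ω) mn) P := fun mn =>
    integrable_finset_sum _ fun k _ => hηint k
  have habs₃ : ∀ mn : ℕ × ℕ, ∫ ω, |g₃ (X ω) mn| ∂P ≤ mn.2 * b' := by
    rintro ⟨m, n⟩
    calc ∫ ω, |g₃ (X ω) (m, n)| ∂P
        ≤ ∫ ω, ∑ k ∈ Finset.range n, |η k ω| ∂P :=
          integral_mono (hint₃ (m, n)).abs
            (integrable_finset_sum _ fun k _ => (hηint k).abs)
            (fun ω => Finset.abs_sum_le_sum_abs _ _)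
      _ = ∑ k ∈ Finset.range n, ∫ ω, |η k ω| ∂P :=
          integral_finset_sum _ fun k _ => (hηint k).abs
      _ = n * b' := by
          rw [Finset.sum_congr rfl fun k _ => hEη' k, Finset.sum_const, Finset.card_range,
            nsmul_eq_mul]
  have hsum₃ : Summable
      (fun mn : ℕ × ℕ => (P (T ⁻¹' {mn})).toReal * ∫ ω, |g₃ (X ω) mn| ∂P) := by
    have hbd : Summable (fun mn : ℕ × ℕ => p mn.1 * (q mn.2 * mn.2) * b') :=
      (hpsum.mul_of_nonneg hqm hp0 hqm0).mul_right b'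
    refine Summable.of_nonneg_of_le (fun mn => mul_nonneg ENNReal.toReal_nonneg
      (integral_nonneg fun ω => abs_nonneg _)) (fun mn => ?_) hbd
    rw [hμ mn]
    calc p mn.1 * q mn.2 * ∫ ω, |g₃ (X ω) mn| ∂P
        ≤ p mn.1 * q mn.2 * (mn.2 * b') :=
          mul_le_mul_of_nonneg_left (habs₃ mn) (mul_nonneg (hp0 _) (hq0 _))
      _ = p mn.1 * (q mn.2 * mn.2) * b' := by ring
  obtain ⟨hi₃, he₃⟩ := key_decomp P T hTmeas X hXmeas hXT g₃ hg₃ hint₃ hsum₃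
  have he₃' : ∫ ω, ∑ k ∈ Finset.range (N₂ ω), η k ω ∂P = M₂ * b := by
    rw [show (fun ω => ∑ k ∈ Finset.range (N₂ ω), η k ω)
        = fun ω => g₃ (X ω) (T ω) from rfl, he₃]
    have hval : ∀ mn : ℕ × ℕ, (P (T ⁻¹' {mn})).toReal * ∫ ω, g₃ (X ω) mn ∂P
        = (p mn.1 * (q mn.2 * mn.2)) * b := by
      intro mn
      rw [hμ mn, show (fun ω => g₃ (X ω) mn) = fun ω => ∑ k ∈ Finset.range mn.2, η k ω from rfl,
        integral_finset_sum _ fun k _ => hηint k,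
        Finset.sum_congr rfl fun k ( _ : k ∈ Finset.range mn.2) => hEη k, Finset.sum_const,
        Finset.card_range, nsmul_eq_mul]
      ring
    rw [tsum_congr hval, tsum_mul_right, tsum_prod_mul_aux hpsum hqm hp0 hqm0, hptsum, one_mul]
  -- ===== application 4 : the minimum =====
  set g₄ : (ℕ → ℝ × ℝ) → ℕ × ℕ → ℝ := fun _ mn => ((min mn.1 mn.2 : ℕ) : ℝ) with hg₄def
  have hg₄ : ∀ mn, Measurable (fun x => g₄ x mn) := fun mn => measurable_const
  have hint₄ : ∀ mn : ℕ × ℕ, Integrable (fun ω => g₄ (X ω) mn) P := fun mn =>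
    integrable_const _
  have hval₄ : ∀ mn : ℕ × ℕ, ∫ ω, g₄ (X ω) mn ∂P = ((min mn.1 mn.2 : ℕ) : ℝ) := by
    intro mn
    rw [show (fun ω => g₄ (X ω) mn) = fun _ : Ω => ((min mn.1 mn.2 : ℕ) : ℝ) from rfl,
      integral_const]
    simp
  have habs₄ : ∀ mn : ℕ × ℕ, ∫ ω, |g₄ (X ω) mn| ∂P = ((min mn.1 mn.2 : ℕ) : ℝ) := by
    intro mn
    rw [show (fun ω => |g₄ (X ω) mn|) = fun _ : Ω => |((min mn.1 mn.2 : ℕ) : ℝ)| from rfl,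
      integral_const]
    simp
  have hsum₄ : Summable
      (fun mn : ℕ × ℕ => (P (T ⁻¹' {mn})).toReal * ∫ ω, |g₄ (X ω) mn| ∂P) := by
    have hbd : Summable (fun mn : ℕ × ℕ => (p mn.1 * mn.1) * q mn.2) :=
      hpm.mul_of_nonneg hqsum hpm0 hq0
    refine Summable.of_nonneg_of_le (fun mn => mul_nonneg ENNReal.toReal_nonneg
      (integral_nonneg fun ω => abs_nonneg _)) (fun mn => ?_) hbd
    rw [hμ mn, habs₄ mn]
    have hmin : ((min mn.1 mn.2 : ℕ) : ℝ) ≤ (mn.1 : ℝ) := Nat.cast_le.mpr (min_le_left _ _)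
    calc p mn.1 * q mn.2 * ((min mn.1 mn.2 : ℕ) : ℝ)
        ≤ p mn.1 * q mn.2 * (mn.1 : ℝ) :=
          mul_le_mul_of_nonneg_left hmin (mul_nonneg (hp0 _) (hq0 _))
      _ = (p mn.1 * mn.1) * q mn.2 := by ring
  obtain ⟨hi₄, he₄⟩ := key_decomp P T hTmeas X hXmeas hXT g₄ hg₄ hint₄ hsum₄
  have he₄' : ∫ ω, ((min (N₁ ω) (N₂ ω) : ℕ) : ℝ) ∂P
      = ∑' mn : ℕ × ℕ, (p mn.1 * q mn.2) * ((min mn.1 mn.2 : ℕ) : ℝ) := by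
    rw [show (fun ω => ((min (N₁ ω) (N₂ ω) : ℕ) : ℝ)) = fun ω => g₄ (X ω) (T ω) from rfl, he₄]
    exact tsum_congr fun mn => by rw [hμ mn, hval₄ mn]
  -- ===== final assembly =====
  have hSmin : Summable (fun mn : ℕ × ℕ => (p mn.1 * q mn.2) * ((min mn.1 mn.2 : ℕ) : ℝ)) := by
    have hbd : Summable (fun mn : ℕ × ℕ => (p mn.1 * mn.1) * q mn.2) :=
      hpm.mul_of_nonneg hqsum hpm0 hq0
    refine Summable.of_nonneg_of_le (fun mn => mul_nonneg (mul_nonneg (hp0 _) (hq0 _))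
      (Nat.cast_nonneg _)) (fun mn => ?_) hbd
    have hmin : ((min mn.1 mn.2 : ℕ) : ℝ) ≤ (mn.1 : ℝ) := Nat.cast_le.mpr (min_le_left _ _)
    calc p mn.1 * q mn.2 * ((min mn.1 mn.2 : ℕ) : ℝ)
        ≤ p mn.1 * q mn.2 * (mn.1 : ℝ) :=
          mul_le_mul_of_nonneg_left hmin (mul_nonneg (hp0 _) (hq0 _))
      _ = (p mn.1 * mn.1) * q mn.2 := by ring
  have hSF : Summable (fun mn : ℕ × ℕ => (p mn.1 * q mn.2) * ((mn.1 * mn.2) * (a * b))) :=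
    ((hpm.mul_of_nonneg hqm hpm0 hqm0).mul_right (a * b)).congr fun mn => by ring
  have hSG : Summable (fun mn : ℕ × ℕ =>
      (p mn.1 * q mn.2) * (((min mn.1 mn.2 : ℕ) : ℝ) * (c - a * b))) :=
    (hSmin.mul_right (c - a * b)).congr fun mn => by ring
  have hsplit : ∑' mn : ℕ × ℕ, (p mn.1 * q mn.2) *
        ((mn.1 * mn.2) * (a * b) + ((min mn.1 mn.2 : ℕ) : ℝ) * (c - a * b))
      = (∑' mn : ℕ × ℕ, (p mn.1 * q mn.2) * ((mn.1 * mn.2) * (a * b)))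
        + ∑' mn : ℕ × ℕ, (p mn.1 * q mn.2) * (((min mn.1 mn.2 : ℕ) : ℝ) * (c - a * b)) := by
    rw [← Summable.tsum_add hSF hSG]
    exact tsum_congr fun mn => by ring
  have hF : ∑' mn : ℕ × ℕ, (p mn.1 * q mn.2) * ((mn.1 * mn.2) * (a * b))
      = M₁ * M₂ * (a * b) := by
    rw [tsum_congr (fun mn : ℕ × ℕ =>
      show (p mn.1 * q mn.2) * ((mn.1 * mn.2) * (a * b))
        = ((p mn.1 * mn.1) * (q mn.2 * mn.2)) * (a * b) from by ring),
      tsum_mul_right, tsum_prod_mul_aux hpm hqm hpm0 hqm0]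
  have hG : ∑' mn : ℕ × ℕ, (p mn.1 * q mn.2) * (((min mn.1 mn.2 : ℕ) : ℝ) * (c - a * b))
      = (∫ ω, ((min (N₁ ω) (N₂ ω) : ℕ) : ℝ) ∂P) * (c - a * b) := by
    rw [tsum_congr (fun mn : ℕ × ℕ =>
      show (p mn.1 * q mn.2) * (((min mn.1 mn.2 : ℕ) : ℝ) * (c - a * b))
        = ((p mn.1 * q mn.2) * ((min mn.1 mn.2 : ℕ) : ℝ)) * (c - a * b) from by ring),
      tsum_mul_right, ← he₄']
  simp only [covar]
  rw [show (fun ω => min ((N₁ ω : ℝ)) ((N₂ ω) : ℝ))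
      = fun ω => ((min (N₁ ω) (N₂ ω) : ℕ) : ℝ) from funext fun ω => by push_cast; rfl,
    he₁', hsplit, hF, hG, he₂', he₃', ← ha, ← hb, ← hc]
  ring
end

section
/- For every real r ≥ 1 with E[|ξ₀|^r] < ∞, the r-th absolute moment of the compound Poisson sum is finite: E[(Σ_{j=0}^{N−1} |ξ_j|)^r] < ∞. -/
open MeasureTheory ProbabilityTheory Filter
open Real
open scoped ENNReal NNReal


lemma summable_nat_pow_mul_pow_div_factorial (c : ℝ) (hc : 0 ≤ c) (k : ℕ) :
    Summable (fun n : ℕ => (n : ℝ) ^ k * c ^ n / (Nat.factorial n)) := by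
  apply summable_of_ratio_norm_eventually_le (r := 1/2) (by norm_num)
  filter_upwards [eventually_ge_atTop (max 1 ⌈2 ^ (k+1) * c⌉₊)] with n hn
  have h1 : (1 : ℝ) ≤ n := by exact_mod_cast le_trans (le_max_left _ _) hn
  have h2 : 2 ^ (k+1) * c ≤ (n : ℝ) + 1 := by
    have := Nat.ceil_le.mp (le_trans (le_max_right _ _) hn)
    linarith
  have hfac : (0 : ℝ) < Nat.factorial n := by positivity
  have hterm : (0 : ℝ) ≤ (n : ℝ) ^ k * c ^ n / Nat.factorial n := by positivity
  have hterm' : (0 : ℝ) ≤ ((n+1 : ℕ) : ℝ) ^ k * c ^ (n+1) / Nat.factorial (n+1) := by positivity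
  rw [Real.norm_of_nonneg hterm', Real.norm_of_nonneg hterm]
  have e1 : ((n+1 : ℕ) : ℝ) ^ k * c ^ (n+1) / Nat.factorial (n+1)
      = (((n : ℝ)+1) ^ k / ((n:ℝ)+1) * c) * (c ^ n / Nat.factorial n) := by
    rw [Nat.factorial_succ, pow_succ]
    push_cast
    field_simp
  have e2 : (1:ℝ)/2 * ((n : ℝ) ^ k * c ^ n / Nat.factorial n)
      = ((n:ℝ) ^ k / 2) * (c ^ n / Nat.factorial n) := by ring
  rw [e1, e2]
  apply mul_le_mul_of_nonneg_right _ (by positivity)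
  have hpos : (0:ℝ) < (n:ℝ) + 1 := by linarith
  rw [div_mul_eq_mul_div, div_le_iff₀ hpos]
  have h3 : ((n:ℝ)+1) ^ k ≤ 2 ^ k * (n:ℝ) ^ k := by
    rw [← mul_pow]
    exact pow_le_pow_left₀ (by linarith) (by linarith) k
  have h4 : 2 ^ k * c ≤ ((n:ℝ)+1)/2 := by
    have : (2:ℝ) ^ (k+1) = 2 * 2 ^ k := by ring
    rw [this] at h2; linarith
  calc ((n:ℝ)+1) ^ k * c ≤ 2 ^ k * (n:ℝ) ^ k * c :=
        mul_le_mul_of_nonneg_right h3 hc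
    _ = (n:ℝ) ^ k * (2 ^ k * c) := by ring
    _ ≤ (n:ℝ) ^ k * (((n:ℝ)+1)/2) := by
        apply mul_le_mul_of_nonneg_left h4 (by positivity)
    _ = (n:ℝ) ^ k / 2 * ((n:ℝ)+1) := by ring

lemma poisson_rpow_tsum_lt_top (lam : NNReal) (r : ℝ) (hr : 1 ≤ r) :
    ∑' n : ℕ, ENNReal.ofReal (poissonPMFReal lam n) * ENNReal.ofReal ((n:ℝ) ^ r) < ⊤ := by
  set k := ⌈r⌉₊ with hk
  have hk1 : 1 ≤ k := Nat.one_le_ceil_iff.mpr (by linarith)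
  have hrk : r ≤ (k : ℝ) := Nat.le_ceil r
  set f : ℕ → ℝ := fun n => poissonPMFReal lam n * (n:ℝ) ^ r with hf
  have hfnonneg : ∀ n, 0 ≤ f n := fun n =>
    mul_nonneg poissonPMFReal_nonneg (Real.rpow_nonneg (Nat.cast_nonneg n) r)
  have hsum : Summable f := by
    have hg : Summable (fun n : ℕ => Real.exp (-(lam:ℝ)) * ((n : ℝ) ^ k * (lam:ℝ) ^ n / (Nat.factorial n))) :=
      (summable_nat_pow_mul_pow_div_factorial (lam:ℝ) lam.coe_nonneg k).mul_left _
    apply Summable.of_nonneg_of_le hfnonneg _ hg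
    intro n
    rcases Nat.eq_zero_or_pos n with hn | hn
    · subst hn
      have : ((0:ℕ):ℝ) ^ r = 0 := by
        rw [Nat.cast_zero]; exact Real.zero_rpow (by linarith)
      simp only [hf, this, mul_zero]
      positivity
    · have h1 : (1:ℝ) ≤ (n:ℝ) := by exact_mod_cast hn
      have hle : (n:ℝ) ^ r ≤ (n:ℝ) ^ k := by
        rw [← Real.rpow_natCast (n:ℝ) k]
        exact Real.rpow_le_rpow_of_exponent_le h1 hrk
      have : f n = Real.exp (-(lam:ℝ)) * ((lam:ℝ) ^ n / Nat.factorial n * (n:ℝ) ^ r) := by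
        simp only [hf, poissonPMFReal]; ring
      rw [this]
      apply mul_le_mul_of_nonneg_left _ (Real.exp_nonneg _)
      calc (lam:ℝ) ^ n / Nat.factorial n * (n:ℝ) ^ r
          ≤ (lam:ℝ) ^ n / Nat.factorial n * (n:ℝ) ^ k :=
            mul_le_mul_of_nonneg_left hle (by positivity)
        _ = (n:ℝ) ^ k * (lam:ℝ) ^ n / Nat.factorial n := by ring
  calc ∑' n : ℕ, ENNReal.ofReal (poissonPMFReal lam n) * ENNReal.ofReal ((n:ℝ) ^ r)
      = ∑' n : ℕ, ENNReal.ofReal (f n) := by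
        congr 1; funext n
        rw [← ENNReal.ofReal_mul poissonPMFReal_nonneg]
    _ = ENNReal.ofReal (∑' n, f n) := (ENNReal.ofReal_tsum_of_nonneg hfnonneg hsum).symm
    _ < ⊤ := ENNReal.ofReal_lt_top

/-- **Finiteness of the `r`-th absolute moment of a compound Poisson sum.** -/
theorem compoundPoisson_rth_moment_finite
    {Ω : Type*} [MeasurableSpace Ω] (P : Measure Ω) [IsProbabilityMeasure P]
    (lam : NNReal) (hlam : 0 < lam)
    (N : Ω → ℕ) (hNmeas : Measurable N) (hNpois : P.map N = poissonMeasure lam)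
    (ξ : ℕ → Ω → ℝ) (hmeas : ∀ j, Measurable (ξ j))
    (hiid : iIndepFun ξ P)
    (hident : ∀ j, P.map (ξ j) = P.map (ξ 0))
    (hindep : IndepFun (fun ω => fun j => ξ j ω) N P)
    (r : ℝ) (hr : 1 ≤ r)
    (hmom : Integrable (fun ω => |ξ 0 ω| ^ r) P) :
    Integrable (fun ω => (∑ j ∈ Finset.range (N ω), |ξ j ω|) ^ r) P := by
  classical
  have hr0 : (0:ℝ) < r := by linarith
  -- the r-th absolute moment of ξ 0, as an ℝ≥0∞
  set M : ℝ≥0∞ := ∫⁻ ω, ENNReal.ofReal (|ξ 0 ω| ^ r) ∂P with hM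
  have hMlt : M < ⊤ := by
    have := hmom.2
    rw [hasFiniteIntegral_iff_norm] at this
    refine lt_of_le_of_lt (le_of_eq ?_) this
    apply lintegral_congr; intro ω
    rw [Real.norm_of_nonneg (Real.rpow_nonneg (abs_nonneg _) r)]
  -- the random vector of all ξ's
  set Ξ : Ω → (ℕ → ℝ) := fun ω => fun j => ξ j ω with hΞdef
  have hΞ : Measurable Ξ := measurable_pi_lambda _ hmeas
  -- φ n : the functional applied to a sequence
  set φ : ℕ → (ℕ → ℝ) → ℝ≥0∞ :=
    fun n x => ENNReal.ofReal ((∑ j ∈ Finset.range n, |x j|) ^ r) with hφdef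
  have hφmeas : ∀ n, Measurable (φ n) := by
    intro n
    apply Measurable.ennreal_ofReal
    exact (Real.continuous_rpow_const hr0.le).measurable.comp
      (Finset.measurable_sum _ fun j _ => (measurable_pi_apply j).abs)
  -- ψ n : indicator of {n} on ℕ
  set ψ : ℕ → ℕ → ℝ≥0∞ := fun n m => if m = n then 1 else 0 with hψdef
  have hψmeas : ∀ n, Measurable (ψ n) := fun n => measurable_from_nat
  -- identical distribution: each |ξ j|^r has lintegral M
  have hIdent : ∀ j, ∫⁻ ω, ENNReal.ofReal (|ξ j ω| ^ r) ∂P = M := by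
    intro j
    have hf : Measurable fun x : ℝ => ENNReal.ofReal (|x| ^ r) :=
      ((Real.continuous_rpow_const hr0.le).measurable.comp measurable_abs).ennreal_ofReal
    calc ∫⁻ ω, ENNReal.ofReal (|ξ j ω| ^ r) ∂P
        = ∫⁻ x, ENNReal.ofReal (|x| ^ r) ∂(P.map (ξ j)) :=
          (lintegral_map hf (hmeas j)).symm
      _ = ∫⁻ x, ENNReal.ofReal (|x| ^ r) ∂(P.map (ξ 0)) := by rw [hident j]
      _ = M := lintegral_map hf (hmeas 0)
  -- the per-n moment bound
  have habs_meas : ∀ j, Measurable fun ω => |ξ j ω| ^ r := fun j =>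
    (Real.continuous_rpow_const hr0.le).measurable.comp (hmeas j).abs
  have hbound : ∀ n : ℕ, ∫⁻ ω, φ n (Ξ ω) ∂P ≤ ENNReal.ofReal ((n:ℝ) ^ r) * M := by
    intro n
    rcases Nat.eq_zero_or_pos n with hn | hn
    · subst hn
      have h0 : ∀ ω, φ 0 (Ξ ω) = 0 := by
        intro ω; simp [hφdef, Real.zero_rpow hr0.ne']
      rw [lintegral_congr h0, lintegral_zero]
      exact zero_le
    · have hn1 : (1:ℝ) ≤ (n:ℝ) := by exact_mod_cast hn
      have hnpos : (0:ℝ) < (n:ℝ) := by linarith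
      have hpt2 : ∀ ω, φ n (Ξ ω) ≤
          ENNReal.ofReal (((n:ℝ) ^ r * (n:ℝ)⁻¹) * ∑ j ∈ Finset.range n, |ξ j ω| ^ r) := by
        intro ω
        apply ENNReal.ofReal_le_ofReal
        have hz : ∀ j ∈ Finset.range n, 0 ≤ |ξ j ω| := fun j _ => abs_nonneg _
        have hw : ∀ j ∈ Finset.range n, (0:ℝ) ≤ (n:ℝ)⁻¹ := fun j _ => by positivity
        have hw' : ∑ _j ∈ Finset.range n, (n:ℝ)⁻¹ = 1 := by
          rw [Finset.sum_const, Finset.card_range, nsmul_eq_mul]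
          field_simp
        have key := Real.rpow_arith_mean_le_arith_mean_rpow (Finset.range n)
          (fun _ => (n:ℝ)⁻¹) (fun j => |ξ j ω|) hw hw' hz hr
        simp only [← Finset.mul_sum] at key
        have hSnn : 0 ≤ ∑ j ∈ Finset.range n, |ξ j ω| := Finset.sum_nonneg hz
        rw [Real.mul_rpow (by positivity) hSnn] at key
        have e4 : (n:ℝ) ^ r * (n:ℝ)⁻¹ ^ r = 1 := by
          rw [← Real.mul_rpow hnpos.le (by positivity), mul_inv_cancel₀ hnpos.ne',
            Real.one_rpow]
        calc (∑ j ∈ Finset.range n, |ξ j ω|) ^ r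
            = (n:ℝ) ^ r * ((n:ℝ)⁻¹ ^ r * (∑ j ∈ Finset.range n, |ξ j ω|) ^ r) := by
              rw [← mul_assoc, e4, one_mul]
          _ ≤ (n:ℝ) ^ r * ((n:ℝ)⁻¹ * ∑ j ∈ Finset.range n, |ξ j ω| ^ r) :=
              mul_le_mul_of_nonneg_left key (by positivity)
          _ = ((n:ℝ) ^ r * (n:ℝ)⁻¹) * ∑ j ∈ Finset.range n, |ξ j ω| ^ r := by ring
      have hconst_nn : (0:ℝ) ≤ (n:ℝ) ^ r * (n:ℝ)⁻¹ := by positivity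
      calc ∫⁻ ω, φ n (Ξ ω) ∂P
          ≤ ∫⁻ ω, ENNReal.ofReal (((n:ℝ) ^ r * (n:ℝ)⁻¹)
              * ∑ j ∈ Finset.range n, |ξ j ω| ^ r) ∂P := lintegral_mono hpt2
        _ = ENNReal.ofReal ((n:ℝ) ^ r * (n:ℝ)⁻¹)
              * ∫⁻ ω, ENNReal.ofReal (∑ j ∈ Finset.range n, |ξ j ω| ^ r) ∂P := by
            simp_rw [ENNReal.ofReal_mul hconst_nn]
            exact lintegral_const_mul _
              ((Finset.measurable_sum _ fun j _ => habs_meas j).ennreal_ofReal)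
        _ = ENNReal.ofReal ((n:ℝ) ^ r * (n:ℝ)⁻¹) * ((n : ℝ≥0∞) * M) := by
            congr 1
            calc ∫⁻ ω, ENNReal.ofReal (∑ j ∈ Finset.range n, |ξ j ω| ^ r) ∂P
                = ∫⁻ ω, ∑ j ∈ Finset.range n, ENNReal.ofReal (|ξ j ω| ^ r) ∂P := by
                  apply lintegral_congr; intro ω
                  exact ENNReal.ofReal_sum_of_nonneg
                    fun j _ => Real.rpow_nonneg (abs_nonneg _) r
              _ = ∑ j ∈ Finset.range n, ∫⁻ ω, ENNReal.ofReal (|ξ j ω| ^ r) ∂P :=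
                  lintegral_finset_sum _ fun j _ => (habs_meas j).ennreal_ofReal
              _ = ∑ _j ∈ Finset.range n, M := Finset.sum_congr rfl fun j _ => hIdent j
              _ = (n : ℝ≥0∞) * M := by
                  rw [Finset.sum_const, Finset.card_range, nsmul_eq_mul]
        _ = ENNReal.ofReal ((n:ℝ) ^ r) * M := by
            rw [← mul_assoc]
            congr 1
            rw [← ENNReal.ofReal_natCast n, ← ENNReal.ofReal_mul hconst_nn]
            congr 1
            field_simp
  -- measurability of the compound sum
  have hsum_meas : Measurable (fun ω => ∑ j ∈ Finset.range (N ω), |ξ j ω|) := by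
    have hcm : Measurable (fun p : (ℕ → ℝ) × ℕ => ∑ j ∈ Finset.range p.2, |p.1 j|) :=
      measurable_from_prod_countable_left fun n => by
        simpa using Finset.measurable_sum (Finset.range n)
          (fun j _ => ((measurable_pi_apply j).abs : Measurable fun x : ℕ → ℝ => |x j|))
    exact hcm.comp (hΞ.prodMk hNmeas)
  have hF_meas : Measurable (fun ω => (∑ j ∈ Finset.range (N ω), |ξ j ω|) ^ r) :=
    (Real.continuous_rpow_const hr0.le).measurable.comp hsum_meas
  refine ⟨hF_meas.aestronglyMeasurable, ?_⟩
  rw [hasFiniteIntegral_iff_norm]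
  have hnn : ∀ ω, 0 ≤ (∑ j ∈ Finset.range (N ω), |ξ j ω|) ^ r := fun ω =>
    Real.rpow_nonneg (Finset.sum_nonneg fun j _ => abs_nonneg _) r
  -- pointwise decomposition over the value of N
  have hpt : ∀ ω, ENNReal.ofReal ‖(∑ j ∈ Finset.range (N ω), |ξ j ω|) ^ r‖
      = ∑' n, ψ n (N ω) * φ n (Ξ ω) := by
    intro ω
    rw [Real.norm_of_nonneg (hnn ω)]
    rw [tsum_eq_single (N ω) (by intro b hb; simp [hψdef, Ne.symm hb])]
    simp [hψdef, hφdef, hΞdef]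
  calc ∫⁻ ω, ENNReal.ofReal ‖(∑ j ∈ Finset.range (N ω), |ξ j ω|) ^ r‖ ∂P
      = ∫⁻ ω, ∑' n, ψ n (N ω) * φ n (Ξ ω) ∂P := lintegral_congr hpt
    _ = ∑' n, ∫⁻ ω, ψ n (N ω) * φ n (Ξ ω) ∂P :=
        lintegral_tsum fun n =>
          (((hψmeas n).comp hNmeas).mul ((hφmeas n).comp hΞ)).aemeasurable
    _ = ∑' n, (∫⁻ ω, ψ n (N ω) ∂P) * ∫⁻ ω, φ n (Ξ ω) ∂P := by
        congr 1; funext n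
        exact lintegral_mul_eq_lintegral_mul_lintegral_of_indepFun''
          ((hψmeas n).comp hNmeas).aemeasurable ((hφmeas n).comp hΞ).aemeasurable
          (hindep.symm.comp (hψmeas n) (hφmeas n))
    _ ≤ ∑' n, (∫⁻ ω, ψ n (N ω) ∂P) * (ENNReal.ofReal ((n:ℝ) ^ r) * M) :=
        ENNReal.tsum_le_tsum fun n => mul_le_mul_right (hbound n) _
    _ = (∑' n, (∫⁻ ω, ψ n (N ω) ∂P) * ENNReal.ofReal ((n:ℝ) ^ r)) * M := by
        rw [← ENNReal.tsum_mul_right]; congr 1; funext n; ring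
    _ < ⊤ := by
        apply ENNReal.mul_lt_top _ hMlt
        have hν : ∀ n : ℕ, ∫⁻ ω, ψ n (N ω) ∂P = ENNReal.ofReal (poissonPMFReal lam n) := by
          intro n
          have e : (fun ω => ψ n (N ω)) = (N ⁻¹' {n}).indicator (1 : Ω → ℝ≥0∞) := by
            funext ω; simp [hψdef, Set.indicator_apply, Set.mem_preimage]
          rw [e, lintegral_indicator_one (hNmeas (measurableSet_singleton n)),
            ← Measure.map_apply hNmeas (measurableSet_singleton n), hNpois, poissonMeasure,
            Measure.sum_apply _ (measurableSet_singleton n)]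
          rw [tsum_eq_single n (fun m hm => by
            simp [Measure.dirac_apply' _ (measurableSet_singleton n), Ne.symm hm])]
          simp [poissonPMFReal]
        simp_rw [hν]
        exact poisson_rpow_tsum_lt_top lam r hr
end

section
/- For all indices k₁ ≥ k₂ ≥ 1, Cov(ζ_{t_{k₁}}, ζ_{t_{k₂}}) = σ² · ρ^{t_{k₁} − t_{k₂}} (real power); in particular the autocovariance of the IAR process at two observation times depends only on the lag between them, so the process is second-order weakly stationary. -/
open MeasureTheory ProbabilityTheory Filter

section Aux

variable {Ω : Type*} [MeasurableSpace Ω] {P : Measure Ω} [IsProbabilityMeasure P]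
variable {X Y Z : Ω → ℝ}

lemma iar_integrable_mul (hX : MemLp X 2 P) (hY : MemLp Y 2 P) :
    Integrable (fun ω => X ω * Y ω) P := by
  have h : MemLp (X • Y) 1 P := by
    haveI : ENNReal.HolderTriple 2 2 1 := ⟨by rw [ENNReal.inv_two_add_inv_two, inv_one]⟩
    exact hY.smul hX
  exact h.integrable le_rfl

lemma iar_covar_comm (X Y : Ω → ℝ) : covar P X Y = covar P Y X := by
  unfold covar
  rw [mul_comm]
  congr 1
  exact integral_congr_ae (Filter.Eventually.of_forall fun ω => mul_comm _ _)

lemma iar_covar_self (hX : MemLp X 2 P) : covar P X X = variance X P := by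
  rw [variance_eq_sub hX]
  unfold covar
  congr 1
  · exact integral_congr_ae (Filter.Eventually.of_forall fun ω => (sq (X ω)).symm)
  · rw [sq]

lemma iar_covar_zero_of_indep (h : IndepFun X Y P) (hX : MemLp X 2 P) (hY : MemLp Y 2 P) :
    covar P X Y = 0 := by
  have := h.integral_mul_eq_mul_integral hX.1 hY.1
  unfold covar
  rw [show (∫ ω, X ω * Y ω ∂P) = integral P (X * Y) from rfl, this, sub_self]

lemma iar_covar_linear_left (a b : ℝ) (hX : MemLp X 2 P) (hY : MemLp Y 2 P) (hZ : MemLp Z 2 P) :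
    covar P (fun ω => a * X ω + b * Y ω) Z = a * covar P X Z + b * covar P Y Z := by
  have hXZ := iar_integrable_mul hX hZ
  have hYZ := iar_integrable_mul hY hZ
  have hXi := hX.integrable one_le_two
  have hYi := hY.integrable one_le_two
  unfold covar
  have h1 : (∫ ω, (a * X ω + b * Y ω) * Z ω ∂P)
      = a * (∫ ω, X ω * Z ω ∂P) + b * ∫ ω, Y ω * Z ω ∂P := by
    simp_rw [add_mul, mul_assoc]
    rw [integral_add (hXZ.const_mul a) (hYZ.const_mul b), integral_const_mul _ _,
      integral_const_mul _ _]
  have h2 : (∫ ω, (a * X ω + b * Y ω) ∂P)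
      = a * (∫ ω, X ω ∂P) + b * ∫ ω, Y ω ∂P := by
    rw [integral_add (hXi.const_mul a) (hYi.const_mul b), integral_const_mul _ _,
      integral_const_mul _ _]
  rw [h1, h2]
  ring

end Aux

/-- The function expressing `ζ k` in terms of `ζ 0` and `ε 1, …, ε k`. -/
noncomputable def iarFun (ρ σ : ℝ) (t : ℕ → ℝ) : (k : ℕ) → ℝ × (Fin k → ℝ) → ℝ
  | 0 => fun p => p.1
  | (k + 1) => fun p =>
      ρ ^ (t (k + 1) - t k) * iarFun ρ σ t k (p.1, fun j => p.2 j.castSucc) +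
        σ * Real.sqrt (1 - ρ ^ (2 * (t (k + 1) - t k))) * p.2 (Fin.last k)

lemma iarFun_measurable (ρ σ : ℝ) (t : ℕ → ℝ) : ∀ k, Measurable (iarFun ρ σ t k)
  | 0 => measurable_fst
  | (k + 1) => by
    have ih := iarFun_measurable ρ σ t k
    have h1 : Measurable fun p : ℝ × (Fin (k + 1) → ℝ) =>
        iarFun ρ σ t k (p.1, fun j => p.2 j.castSucc) :=
      ih.comp (measurable_fst.prodMk
        (measurable_pi_lambda _ fun j => (measurable_pi_apply _).comp measurable_snd))
    have h2 : Measurable fun p : ℝ × (Fin (k + 1) → ℝ) => p.2 (Fin.last k) :=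
      (measurable_pi_apply _).comp measurable_snd
    exact ((h1.const_mul _).add (h2.const_mul _))

/-- **Autocovariance of the IAR process: weak second-order stationarity.**
Under the IAR recursion, for all indices `k₂ ≤ k₁`,
`Cov (ζ_{t k₁}, ζ_{t k₂}) = σ² * ρ^(t k₁ - t k₂)` (real power); in particular the
autocovariance at two observation times depends only on the lag between them. -/
theorem iar_autocovariance
    {Ω : Type*} [MeasurableSpace Ω] (P : Measure Ω) [IsProbabilityMeasure P]
    (σ ρ : ℝ) (hσ : 0 < σ) (hρ0 : 0 < ρ) (hρ1 : ρ < 1)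
    (t : ℕ → ℝ) (ht : StrictMono t)
    (ζ ε : ℕ → Ω → ℝ)
    (hζ0sq : MemLp (ζ 0) 2 P)
    (hζ0mean : ∫ ω, ζ 0 ω ∂P = 0)
    (hζ0var : variance (ζ 0) P = σ ^ 2)
    (hεsq : ∀ k : ℕ, MemLp (ε (k + 1)) 2 P)
    (hεmean : ∀ k : ℕ, ∫ ω, ε (k + 1) ω ∂P = 0)
    (hεvar : ∀ k : ℕ, variance (ε (k + 1)) P = 1)
    (hεindep : ∀ k : ℕ,
      IndepFun (ε (k + 1)) (fun ω => (ζ 0 ω, fun j : Fin k => ε (j.val + 1) ω)) P)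
    (hrec : ∀ (k : ℕ) (ω : Ω),
      ζ (k + 1) ω = ρ ^ (t (k + 1) - t k) * ζ k ω +
        σ * Real.sqrt (1 - ρ ^ (2 * (t (k + 1) - t k))) * ε (k + 1) ω) :
    (∀ k₁ k₂ : ℕ, k₂ ≤ k₁ →
      covar P (ζ k₁) (ζ k₂) = σ ^ 2 * ρ ^ (t k₁ - t k₂)) ∧
    (∀ k₁ k₂ k₁' k₂' : ℕ, k₂ ≤ k₁ → k₂' ≤ k₁' → t k₁ - t k₂ = t k₁' - t k₂' →
      covar P (ζ k₁) (ζ k₂) = covar P (ζ k₁') (ζ k₂')) := by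
  -- representation of ζ k as a measurable function of (ζ 0, ε 1, …, ε k)
  have hrep : ∀ k ω, ζ k ω = iarFun ρ σ t k (ζ 0 ω, fun j : Fin k => ε (j.val + 1) ω) := by
    intro k
    induction k with
    | zero => intro ω; rfl
    | succ k ih =>
      intro ω
      rw [hrec k ω, ih ω]
      rfl
  -- independence of ε (m+1) from ζ k for k ≤ m
  have hindep : ∀ m k, k ≤ m → IndepFun (ε (m + 1)) (ζ k) P := by
    intro m k hkm
    set g : ℝ × (Fin m → ℝ) → ℝ := fun p =>
      iarFun ρ σ t k (p.1, fun j : Fin k => p.2 ⟨j.val, lt_of_lt_of_le j.isLt hkm⟩) with hg_def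
    have hg : Measurable g :=
      (iarFun_measurable ρ σ t k).comp (measurable_fst.prodMk
        (measurable_pi_lambda _ fun j => (measurable_pi_apply _).comp measurable_snd))
    have hcomp : ζ k = g ∘ (fun ω => (ζ 0 ω, fun j : Fin m => ε (j.val + 1) ω)) := by
      funext ω
      rw [Function.comp_apply, hrep k ω]
    rw [show ε (m + 1) = id ∘ ε (m + 1) from rfl, hcomp]
    exact (hεindep m).comp measurable_id hg
  -- square integrability of ζ k
  have hmem : ∀ k, MemLp (ζ k) 2 P := by
    intro k
    induction k with
    | zero => exact hζ0sq
    | succ k ih =>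
      have : ζ (k + 1) = fun ω => ρ ^ (t (k + 1) - t k) * ζ k ω +
          σ * Real.sqrt (1 - ρ ^ (2 * (t (k + 1) - t k))) * ε (k + 1) ω := funext (hrec k)
      rw [this]
      exact (ih.const_mul _).add ((hεsq k).const_mul _)
  -- mean zero
  have hmean : ∀ k, ∫ ω, ζ k ω ∂P = 0 := by
    intro k
    induction k with
    | zero => exact hζ0mean
    | succ k ih =>
      have heq : ζ (k + 1) = fun ω => ρ ^ (t (k + 1) - t k) * ζ k ω +
          σ * Real.sqrt (1 - ρ ^ (2 * (t (k + 1) - t k))) * ε (k + 1) ω := funext (hrec k)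
      rw [heq]
      rw [integral_add (((hmem k).integrable one_le_two).const_mul _)
        (((hεsq k).integrable one_le_two).const_mul _), integral_const_mul _ _,
        integral_const_mul _ _, ih, hεmean k]
      ring
  -- main covariance formula
  have hcov : ∀ k j, j ≤ k → covar P (ζ k) (ζ j) = σ ^ 2 * ρ ^ (t k - t j) := by
    intro k
    induction k with
    | zero =>
      intro j hj
      interval_cases j
      rw [iar_covar_self hζ0sq, hζ0var, sub_self, Real.rpow_zero, mul_one]
    | succ k ih =>
      intro j hj
      set Δ : ℝ := t (k + 1) - t k with hΔdef
      have hΔpos : 0 < Δ := sub_pos.2 (ht (lt_add_one k))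
      set a : ℝ := ρ ^ Δ with ha_def
      set b : ℝ := σ * Real.sqrt (1 - ρ ^ (2 * Δ)) with hb_def
      have heq : ζ (k + 1) = fun ω => a * ζ k ω + b * ε (k + 1) ω := funext (hrec k)
      have key : ∀ Z : Ω → ℝ, MemLp Z 2 P →
          covar P (ζ (k + 1)) Z = a * covar P (ζ k) Z + b * covar P (ε (k + 1)) Z := by
        intro Z hZ
        rw [show covar P (ζ (k + 1)) Z
            = covar P (fun ω => a * ζ k ω + b * ε (k + 1) ω) Z by rw [← heq]]
        exact iar_covar_linear_left a b (hmem k) (hεsq k) hZ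
      rcases Nat.lt_or_ge j (k + 1) with hjk | hjk
      · -- j ≤ k
        have hj' : j ≤ k := Nat.lt_succ_iff.1 hjk
        have hcovε : covar P (ε (k + 1)) (ζ j) = 0 :=
          iar_covar_zero_of_indep (hindep k j hj') (hεsq k) (hmem j)
        rw [key (ζ j) (hmem j), hcovε, ih j hj', mul_zero, add_zero]
        have hexp : t (k + 1) - t j = Δ + (t k - t j) := by rw [hΔdef]; ring
        rw [hexp, Real.rpow_add hρ0]
        rw [ha_def]
        ring
      · -- j = k + 1
        have hj'' : j = k + 1 := le_antisymm hj hjk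
        subst hj''
        have hρ2Δ : ρ ^ (2 * Δ) ≤ 1 :=
          Real.rpow_le_one hρ0.le hρ1.le (by positivity)
        have hb2 : b ^ 2 = σ ^ 2 * (1 - ρ ^ (2 * Δ)) := by
          rw [hb_def, mul_pow, Real.sq_sqrt (by linarith)]
        have ha2 : a ^ 2 = ρ ^ (2 * Δ) := by
          rw [ha_def, ← Real.rpow_natCast (ρ ^ Δ) 2, ← Real.rpow_mul hρ0.le]
          norm_num [mul_comm]
        have hcovεζk : covar P (ε (k + 1)) (ζ k) = 0 :=
          iar_covar_zero_of_indep (hindep k k le_rfl) (hεsq k) (hmem k)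
        have hcovεε : covar P (ε (k + 1)) (ε (k + 1)) = 1 := by
          rw [iar_covar_self (hεsq k), hεvar k]
        have hcovζkζk : covar P (ζ k) (ζ k) = σ ^ 2 := by
          rw [ih k le_rfl, sub_self, Real.rpow_zero, mul_one]
        rw [key (ζ (k + 1)) (hmem (k + 1)),
          iar_covar_comm (ζ k) (ζ (k + 1)), iar_covar_comm (ε (k + 1)) (ζ (k + 1)),
          key (ζ k) (hmem k), key (ε (k + 1)) (hεsq k),
          hcovζkζk, hcovεζk, hcovεε, iar_covar_comm (ζ k) (ε (k + 1)), hcovεζk]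
        rw [sub_self, Real.rpow_zero]
        nlinarith [ha2, hb2]
  refine ⟨fun k₁ k₂ h => hcov k₁ k₂ h, fun k₁ k₂ k₁' k₂' h h' hlag => ?_⟩
  rw [hcov k₁ k₂ h, hcov k₁' k₂' h', hlag]
end
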